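/- There exists an infinite family of signed 2-edge-connected simple subcubic graphs (Gₙ, σₙ) with F(Gₙ, σₙ) = v(Gₙ)/3. Specifically, for each n ≥ 2, the signed graph obtained by arranging n negative-triangle gadgets (each a triangle with exactly one negative edge and one degree-2 vertex) in a cycle, joined by positive edges, is 2-edge-connected, subcubic, has 3n vertices, and has frustration index exactly n. -/

import Mathlib

open scoped Classical

/-- The Boolean indicating whether an edge crosses the vertex set `X`. -/
noncomputable def sgnCross {V : Type*} (X : Set V) : Sym2 V → Bool :=
  Sym2.lift ⟨fun a b => xor (decide (a ∈ X)) (decide (b ∈ X)),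
    fun a b => Bool.xor_comm _ _⟩

/-- The signature obtained from `σ` by switching at the edge-cut `[X, Xᶜ]`:
the signs of all edges crossing `X` are flipped.  (`true` = negative.) -/
noncomputable def sgnSwitch {V : Type*} (σ : Sym2 V → Bool) (X : Set V) : Sym2 V → Bool :=
  fun e => xor (σ e) (sgnCross X e)

/-- The number of negative edges of the signed graph `(G, σ)`. -/
noncomputable def negNum {V : Type*} (G : SimpleGraph V) (σ : Sym2 V → Bool) : ℕ :=
  {e | e ∈ G.edgeSet ∧ σ e = true}.ncard

/-- The frustration index of `(G, σ)`: the minimum number of negative edges over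
all switching-equivalent signatures. -/
noncomputable def frust {V : Type*} (G : SimpleGraph V) (σ : Sym2 V → Bool) : ℕ :=
  ⨅ X : Set V, negNum G (sgnSwitch σ X)

/-- The number of edges of `G` in the edge-cut `[X, Xᶜ]`. -/
noncomputable def cutSize {V : Type*} (G : SimpleGraph V) (X : Set V) : ℕ :=
  {e | e ∈ G.edgeSet ∧ sgnCross X e = true}.ncard

/-- A graph is 2-edge-connected if every edge-cut has at least 2 edges. -/
def TwoEdgeConn {V : Type*} (G : SimpleGraph V) : Prop :=
  ∀ X : Set V, X.Nonempty → Xᶜ.Nonempty → 2 ≤ cutSize G X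

/-- The graph `Gₙ`: `n` triangles `aᵢxᵢyᵢ` (on vertices `(i,0), (i,1), (i,2)`)
joined cyclically by the edges `xᵢ y_{i−1}` (indices mod `n`). -/
def famG (n : ℕ) : SimpleGraph (Fin n × Fin 3) where
  Adj p q := p ≠ q ∧ (p.1 = q.1 ∨
    (p.2 = 1 ∧ q.2 = 2 ∧ ((q.1 : ℕ) + 1) % n = (p.1 : ℕ)) ∨
    (q.2 = 1 ∧ p.2 = 2 ∧ ((p.1 : ℕ) + 1) % n = (q.1 : ℕ)))
  symm := by
    constructor
    rintro p q ⟨hne, h⟩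
    refine ⟨Ne.symm hne, ?_⟩
    rcases h with h | h | h
    · exact Or.inl h.symm
    · exact Or.inr (Or.inr h)
    · exact Or.inr (Or.inl h)
  loopless := by constructor; rintro p ⟨hne, -⟩; exact hne rfl

/-- The signature `σₙ`: the edge `aᵢyᵢ` of each triangle is negative, everything
else is positive. -/
noncomputable def famS (n : ℕ) : Sym2 (Fin n × Fin 3) → Bool :=
  fun e => decide (∃ i : Fin n, e = s((i, (0 : Fin 3)), (i, (2 : Fin 3))))


/-- pattern of second coordinates along the Hamiltonian cycle: x, a, y -/
def pat (r : ℕ) : Fin 3 := if r = 0 then 1 else if r = 1 then 0 else 2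

def hamv (n : ℕ) (hn : 0 < n) (t : ℕ) : Fin n × Fin 3 :=
  (⟨(t / 3) % n, Nat.mod_lt _ hn⟩, pat (t % 3))

lemma hamv_period (n : ℕ) (hn : 0 < n) (t : ℕ) :
    hamv n hn (t + 3 * n) = hamv n hn t := by
  unfold hamv
  have h1 : (t + 3 * n) % 3 = t % 3 := by omega
  have h2 : (t + 3 * n) / 3 = t / 3 + n := by omega
  simp [h1, h2, Nat.add_mod_right]

lemma hamv_surj (n : ℕ) (hn : 0 < n) (v : Fin n × Fin 3) :
    ∃ t < 3 * n, hamv n hn t = v := by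
  obtain ⟨i, j⟩ := v
  have hi := i.2
  fin_cases j
  · exact ⟨3 * i + 1, by omega, by
      unfold hamv pat
      have : (3 * (i:ℕ) + 1) % 3 = 1 := by omega
      have h2 : (3 * (i:ℕ) + 1) / 3 = i := by omega
      simp [this, h2, Nat.mod_eq_of_lt hi]⟩
  · exact ⟨3 * i, by omega, by
      unfold hamv pat
      have : (3 * (i:ℕ)) % 3 = 0 := by omega
      have h2 : (3 * (i:ℕ)) / 3 = i := by omega
      simp [this, h2, Nat.mod_eq_of_lt hi]⟩
  · exact ⟨3 * i + 2, by omega, by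
      unfold hamv pat
      have : (3 * (i:ℕ) + 2) % 3 = 2 := by omega
      have h2 : (3 * (i:ℕ) + 2) / 3 = i := by omega
      simp [this, h2, Nat.mod_eq_of_lt hi]⟩

lemma hamv_inj (n : ℕ) (hn : 0 < n) {t1 t2 : ℕ} (h : hamv n hn t1 = hamv n hn t2) :
    t1 % (3 * n) = t2 % (3 * n) := by
  unfold hamv at h
  rw [Prod.ext_iff] at h
  obtain ⟨h1, h2⟩ := h
  have hm1 : (t1 / 3) % n = (t2 / 3) % n := congrArg Fin.val h1
  have hr1 : t1 % 3 < 3 := Nat.mod_lt _ (by omega)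
  have hr2 : t2 % 3 < 3 := Nat.mod_lt _ (by omega)
  have hm2 : t1 % 3 = t2 % 3 := by
    unfold pat at h2
    interval_cases h3 : t1 % 3 <;> interval_cases h4 : t2 % 3 <;> simp_all
  -- t % (3*n) = 3 * ((t/3) % n) + t % 3
  have key : ∀ t : ℕ, t % (3 * n) = 3 * ((t / 3) % n) + t % 3 := by
    intro t
    have e1 : t = 3 * n * (t / 3 / n) + (3 * ((t / 3) % n) + t % 3) := by
      have a1 := Nat.div_add_mod t 3
      have a2 := Nat.div_add_mod (t / 3) n
      nlinarith [a1, a2]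
    have hlt : 3 * ((t / 3) % n) + t % 3 < 3 * n := by
      have := Nat.mod_lt (t / 3) hn
      have := Nat.mod_lt t (show 0 < 3 by omega)
      omega
    conv_lhs => rw [e1]
    rw [Nat.mul_add_mod, Nat.mod_eq_of_lt hlt]
  rw [key, key, hm1, hm2]

lemma hamv_adj (n : ℕ) (hn : 0 < n) (t : ℕ) :
    (famG n).Adj (hamv n hn t) (hamv n hn (t + 1)) := by
  have h3 : t % 3 = 0 ∨ t % 3 = 1 ∨ t % 3 = 2 := by omega
  rcases h3 with h | h | h
  · have e1 : (t + 1) % 3 = 1 := by omega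
    have e2 : (t + 1) / 3 = t / 3 := by omega
    refine ⟨?_, Or.inl ?_⟩
    · unfold hamv pat
      simp [h, e1, e2, Prod.ext_iff]
    · unfold hamv
      simp [e2]
  · have e1 : (t + 1) % 3 = 2 := by omega
    have e2 : (t + 1) / 3 = t / 3 := by omega
    refine ⟨?_, Or.inl ?_⟩
    · unfold hamv pat
      simp [h, e1, e2, Prod.ext_iff]
    · unfold hamv
      simp [e2]
  · have e1 : (t + 1) % 3 = 0 := by omega
    have e2 : (t + 1) / 3 = t / 3 + 1 := by omega
    refine ⟨?_, Or.inr (Or.inr ?_)⟩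
    · unfold hamv pat
      simp [h, e1, Prod.ext_iff]
    · unfold hamv pat
      refine ⟨by simp [e1], by simp [h], ?_⟩
      simp only [e2]
      exact Nat.mod_add_mod (t/3) n 1 ▸ rfl

lemma exists_cross (h : ℕ → Bool) : ∀ b : ℕ, ∀ a : ℕ, a ≤ b → h a ≠ h b →
    ∃ t, a ≤ t ∧ t < b ∧ h t ≠ h (t + 1) := by
  intro b
  induction b with
  | zero => intro a ha hne; obtain rfl := Nat.le_zero.mp ha; exact absurd rfl hne
  | succ b ih =>
    intro a ha hne
    by_cases hb : h b = h (b + 1)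
    · have hab : a ≤ b := by
        rcases Nat.lt_or_ge a (b+1) with h1 | h1
        · omega
        · exfalso; have : a = b + 1 := by omega
          exact hne (this ▸ rfl)
      obtain ⟨t, ht1, ht2, ht3⟩ := ih a hab (by rw [hb]; exact hne)
      exact ⟨t, ht1, by omega, ht3⟩
    · rcases Nat.eq_or_lt_of_le ha with rfl | hlt
      · exact absurd rfl hne
      · exact ⟨b, by omega, by omega, hb⟩

lemma window {N x y : ℕ} (hxy : x < y) (hw : y < x + N) (h : x % N = y % N) : False := by
  have hd : N ∣ y - x := (Nat.modEq_iff_dvd' (by omega)).mp h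
  have := Nat.le_of_dvd (by omega) hd
  omega

lemma sgnCross_mk {V : Type*} (X : Set V) (a b : V) :
    sgnCross X s(a, b) = xor (decide (a ∈ X)) (decide (b ∈ X)) := rfl

lemma two_le_cut (n : ℕ) (hn : 2 ≤ n) (X : Set (Fin n × Fin 3))
    (h1 : X.Nonempty) (h2 : Xᶜ.Nonempty) : 2 ≤ cutSize (famG n) X := by
  have hn0 : 0 < n := by omega
  set N := 3 * n with hN
  obtain ⟨u, hu⟩ := h1
  obtain ⟨w, hw⟩ := h2
  obtain ⟨a, haN, hav⟩ := hamv_surj n hn0 u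
  obtain ⟨b, hbN, hbv⟩ := hamv_surj n hn0 w
  set h : ℕ → Bool := fun t => decide (hamv n hn0 t ∈ X) with hh
  have hper : ∀ t, h (t + N) = h t := fun t => by
    simp only [hh]
    rw [show t + N = t + 3 * n from rfl, hamv_period]
  have hha : h a = true := by simp [hh, hav, hu]
  have hhb : h b = false := by simp [hh, hbv]; exact hw
  -- find two crossings t1 < t2 within a window of length N
  have key : ∃ t1 t2, t1 < t2 ∧ t2 < t1 + N ∧ h t1 ≠ h (t1+1) ∧ h t2 ≠ h (t2+1) := by
    rcases Nat.lt_trichotomy a b with hab | hab | hab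
    · obtain ⟨t1, k1, k2, k3⟩ := exists_cross h b a (by omega) (by rw [hha, hhb]; simp)
      obtain ⟨t2, l1, l2, l3⟩ := exists_cross h (a + N) b (by omega)
        (by rw [hhb, hper, hha]; simp)
      exact ⟨t1, t2, by omega, by omega, k3, l3⟩
    · rw [hab, hhb] at hha; simp at hha
    · obtain ⟨t1, k1, k2, k3⟩ := exists_cross h a b (by omega) (by rw [hha, hhb]; simp)
      obtain ⟨t2, l1, l2, l3⟩ := exists_cross h (b + N) a (by omega)
        (by rw [hha, hper, hhb]; simp)
      exact ⟨t1, t2, by omega, by omega, k3, l3⟩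
  obtain ⟨t1, t2, ht12, htw, hc1, hc2⟩ := key
  set e1 : Sym2 (Fin n × Fin 3) := s(hamv n hn0 t1, hamv n hn0 (t1+1)) with he1
  set e2 : Sym2 (Fin n × Fin 3) := s(hamv n hn0 t2, hamv n hn0 (t2+1)) with he2
  have hcross : ∀ t, h t ≠ h (t+1) →
      sgnCross X s(hamv n hn0 t, hamv n hn0 (t+1)) = true := by
    intro t ht
    rw [sgnCross_mk]
    simp only [hh] at ht
    rcases Bool.eq_false_or_eq_true (decide (hamv n hn0 t ∈ X)) with h' | h' <;>
      rcases Bool.eq_false_or_eq_true (decide (hamv n hn0 (t+1) ∈ X)) with h'' | h'' <;>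
      simp_all
  have hmem : ∀ t, s(hamv n hn0 t, hamv n hn0 (t+1)) ∈ (famG n).edgeSet :=
    fun t => (SimpleGraph.mem_edgeSet _).mpr (hamv_adj n hn0 t)
  have hne : e1 ≠ e2 := by
    intro he
    rw [he1, he2, Sym2.eq_iff] at he
    have hNge : 6 ≤ N := by omega
    rcases he with ⟨p, q⟩ | ⟨p, q⟩
    · exact window ht12 htw (hamv_inj n hn0 p)
    · have i1 := hamv_inj n hn0 p
      have i2 := hamv_inj n hn0 q
      rcases Nat.lt_or_ge (t1 + 1) t2 with hc | hc
      · exact window hc (by omega) i2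
      · have ht2 : t2 = t1 + 1 := by omega
        subst ht2
        exact window (by omega) (by omega) i1
  have hsub : {e1, e2} ⊆ {e | e ∈ (famG n).edgeSet ∧ sgnCross X e = true} := by
    rintro e (rfl | rfl)
    · exact ⟨hmem t1, hcross t1 hc1⟩
    · exact ⟨hmem t2, hcross t2 hc2⟩
  calc 2 = ({e1, e2} : Set _).ncard := (Set.ncard_pair hne).symm
    _ ≤ _ := Set.ncard_le_ncard hsub (Set.toFinite _)

lemma ncard_triple_le {α : Type*} (a b c : α) : ({a, b, c} : Set α).ncard ≤ 3 := by
  calc ({a, b, c} : Set α).ncard ≤ ({b, c} : Set α).ncard + 1 := Set.ncard_insert_le _ _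
    _ ≤ (({c} : Set α).ncard + 1) + 1 := by
        exact Nat.add_le_add_right (Set.ncard_insert_le _ _) 1
    _ ≤ 3 := by rw [Set.ncard_singleton]

lemma uniq_pred (n : ℕ) (hn : 0 < n) {m i : ℕ} (hm : m < n) (hi : i < n)
    (h : (m + 1) % n = i) : m = (i + n - 1) % n := by
  rcases Nat.lt_or_ge (m + 1) n with hc | hc
  · rw [Nat.mod_eq_of_lt hc] at h
    subst h
    have : m + 1 + n - 1 = m + n := by omega
    rw [this, Nat.add_mod_right]
    exact (Nat.mod_eq_of_lt hm).symm
  · have hmn : m + 1 = n := by omega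
    have : i = 0 := by rw [← h, hmn, Nat.mod_self]
    subst this
    simp only [Nat.zero_add]
    rw [Nat.mod_eq_of_lt (by omega)]
    omega

lemma subcubic (n : ℕ) (hn : 2 ≤ n) (v : Fin n × Fin 3) :
    ((famG n).neighborSet v).ncard ≤ 3 := by
  have hn0 : 0 < n := by omega
  obtain ⟨i, j⟩ := v
  fin_cases j
  · -- j = 0
    refine le_trans (le_trans (Set.ncard_le_ncard (t := {(i, (1:Fin 3)), (i, 2), (i, 0)})
      ?_ (Set.toFinite _)) (ncard_triple_le _ _ _)) (by norm_num)
    rintro ⟨q1, q2⟩ ⟨hne, hcl⟩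
    rcases hcl with h | ⟨h1, -⟩ | ⟨-, h2, -⟩
    · obtain rfl : i = q1 := h
      fin_cases q2 <;> simp_all <;> simp [Prod.ext_iff]
    · simp at h1
    · simp at h2
  · -- j = 1
    refine le_trans (Set.ncard_le_ncard
      (t := {(i, (0:Fin 3)), (i, 2), (⟨((i:ℕ) + n - 1) % n, Nat.mod_lt _ hn0⟩, 2)})
      ?_ (Set.toFinite _)) (ncard_triple_le _ _ _)
    rintro ⟨q1, q2⟩ ⟨hne, hcl⟩
    rcases hcl with h | ⟨-, h2, h3⟩ | ⟨-, h2, -⟩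
    · obtain rfl : i = q1 := h
      fin_cases q2 <;> simp_all <;> simp [Prod.ext_iff]
    · -- cross edge: q2 = 2, (q1 + 1) % n = i
      have := uniq_pred n hn0 q1.2 i.2 h3
      right; right
      simp only [Set.mem_singleton_iff, Prod.ext_iff]
      exact ⟨Fin.ext this, h2⟩
    · simp at h2
  · -- j = 2
    refine le_trans (Set.ncard_le_ncard
      (t := {(i, (0:Fin 3)), (i, 1), (⟨((i:ℕ) + 1) % n, Nat.mod_lt _ hn0⟩, 1)})
      ?_ (Set.toFinite _)) (ncard_triple_le _ _ _)
    rintro ⟨q1, q2⟩ ⟨hne, hcl⟩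
    rcases hcl with h | ⟨h1, -⟩ | ⟨h1, -, h3⟩
    · obtain rfl : i = q1 := h
      fin_cases q2 <;> simp_all <;> simp [Prod.ext_iff]
    · simp at h1
    · right; right
      simp only [Set.mem_singleton_iff, Prod.ext_iff]
      exact ⟨Fin.ext h3.symm, h1⟩

lemma triangle_edges_mem (n : ℕ) (i : Fin n) :
    s(((i : Fin n), (0:Fin 3)), (i, 1)) ∈ (famG n).edgeSet ∧
    s(((i : Fin n), (1:Fin 3)), (i, 2)) ∈ (famG n).edgeSet ∧
    s(((i : Fin n), (0:Fin 3)), (i, 2)) ∈ (famG n).edgeSet := by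
  refine ⟨?_, ?_, ?_⟩ <;>
    exact (SimpleGraph.mem_edgeSet _).mpr ⟨by simp [Prod.ext_iff], Or.inl rfl⟩

lemma famS_01 (n : ℕ) (i : Fin n) : famS n s(((i : Fin n), (0:Fin 3)), (i, 1)) = false := by
  simp [famS, Sym2.eq_iff, Prod.ext_iff]

lemma famS_12 (n : ℕ) (i : Fin n) : famS n s(((i : Fin n), (1:Fin 3)), (i, 2)) = false := by
  simp [famS, Sym2.eq_iff, Prod.ext_iff]

lemma famS_02 (n : ℕ) (i : Fin n) : famS n s(((i : Fin n), (0:Fin 3)), (i, 2)) = true := by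
  simp [famS]

lemma lower_aux (n : ℕ) (X : Set (Fin n × Fin 3)) (i : Fin n) :
    ∃ e, (e ∈ (famG n).edgeSet ∧ sgnSwitch (famS n) X e = true) ∧ ∀ p ∈ e, p.1 = i := by
  obtain ⟨m1, m2, m3⟩ := triangle_edges_mem n i
  have hone : xor (decide ((i, (0:Fin 3)) ∈ X)) (decide ((i, (1:Fin 3)) ∈ X)) = true ∨
      xor (decide ((i, (1:Fin 3)) ∈ X)) (decide ((i, (2:Fin 3)) ∈ X)) = true ∨
      xor true (xor (decide ((i, (0:Fin 3)) ∈ X)) (decide ((i, (2:Fin 3)) ∈ X))) = true := by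
    generalize decide ((i, (0:Fin 3)) ∈ X) = A
    generalize decide ((i, (1:Fin 3)) ∈ X) = B
    generalize decide ((i, (2:Fin 3)) ∈ X) = C
    cases A <;> cases B <;> cases C <;> simp
  have hmem : ∀ (a b : Fin 3), ∀ p ∈ s(((i : Fin n), a), (i, b)), p.1 = i := by
    intro a b p hp
    rw [Sym2.mem_iff] at hp
    rcases hp with rfl | rfl <;> rfl
  rcases hone with h | h | h
  · exact ⟨_, ⟨m1, by rw [sgnSwitch, famS_01, sgnCross_mk, Bool.false_xor]; exact h⟩, hmem 0 1⟩
  · exact ⟨_, ⟨m2, by rw [sgnSwitch, famS_12, sgnCross_mk, Bool.false_xor]; exact h⟩, hmem 1 2⟩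
  · exact ⟨_, ⟨m3, by rw [sgnSwitch, famS_02, sgnCross_mk]; exact h⟩, hmem 0 2⟩

lemma frust_lower (n : ℕ) (X : Set (Fin n × Fin 3)) :
    n ≤ negNum (famG n) (sgnSwitch (famS n) X) := by
  choose f hf1 hf2 using lower_aux n X
  set S : Set (Sym2 (Fin n × Fin 3)) :=
    {e | e ∈ (famG n).edgeSet ∧ sgnSwitch (famS n) X e = true} with hS
  have hfin : S.Finite := Set.toFinite _
  have hinj : Set.InjOn f (Finset.univ : Finset (Fin n)) := by
    intro a _ b _ hab
    have hpa : (Quot.out (f a)).1 ∈ f a := Sym2.out_fst_mem _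
    have hpb : (Quot.out (f a)).1 ∈ f b := hab ▸ hpa
    exact (hf2 a _ hpa).symm.trans (hf2 b _ hpb)
  have hcard : (Finset.univ : Finset (Fin n)).card ≤ (hfin.toFinset).card := by
    apply Finset.card_le_card_of_injOn f
    · intro a _
      rw [Finset.mem_coe, Set.Finite.mem_toFinset]
      exact hf1 a
    · exact hinj
  calc n = (Finset.univ : Finset (Fin n)).card := by simp
    _ ≤ (hfin.toFinset).card := hcard
    _ = S.ncard := (Set.ncard_eq_toFinset_card S hfin).symm
    _ = negNum (famG n) (sgnSwitch (famS n) X) := rfl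

lemma sgnCross_empty {V : Type*} (e : Sym2 V) : sgnCross (∅ : Set V) e = false := by
  induction e using Sym2.ind with
  | _ a b => simp [sgnCross_mk]

lemma negNum_base (n : ℕ) : negNum (famG n) (sgnSwitch (famS n) ∅) = n := by
  have hσ : sgnSwitch (famS n) (∅ : Set (Fin n × Fin 3)) = famS n := by
    funext e
    rw [sgnSwitch, sgnCross_empty, Bool.xor_false]
  rw [negNum, hσ]
  have hset : {e | e ∈ (famG n).edgeSet ∧ famS n e = true} =
      (fun i : Fin n => s(((i : Fin n), (0:Fin 3)), (i, 2))) '' Set.univ := by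
    ext e
    constructor
    · rintro ⟨-, he⟩
      rw [famS] at he
      obtain ⟨i, rfl⟩ := of_decide_eq_true he
      exact ⟨i, Set.mem_univ _, rfl⟩
    · rintro ⟨i, -, rfl⟩
      exact ⟨(triangle_edges_mem n i).2.2, famS_02 n i⟩
  rw [hset, Set.ncard_image_of_injective _ ?_, Set.ncard_univ, Nat.card_eq_fintype_card,
    Fintype.card_fin]
  intro a b hab
  rw [Sym2.eq_iff] at hab
  rcases hab with ⟨h, -⟩ | ⟨h, -⟩ <;> exact (Prod.ext_iff.mp h).1

/-- For every `n ≥ 2`, the signed graph `(Gₙ, σₙ)` (`n` negative-triangle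
gadgets joined in a cycle by positive edges) is 2-edge-connected, subcubic, has `3n`
vertices, and has frustration index exactly `n` (= one third of its vertices). -/
theorem famG_twoEdgeConn_subcubic_frust (n : ℕ) (hn : 2 ≤ n) :
    TwoEdgeConn (famG n) ∧
    (∀ v, ((famG n).neighborSet v).ncard ≤ 3) ∧
    Fintype.card (Fin n × Fin 3) = 3 * n ∧
    frust (famG n) (famS n) = n := by
  refine ⟨fun X => two_le_cut n hn X, subcubic n hn, by simp [Nat.mul_comm], ?_⟩
  apply le_antisymm
  · calc frust (famG n) (famS n) ≤ negNum (famG n) (sgnSwitch (famS n) ∅) :=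
        ciInf_le (OrderBot.bddBelow _) ∅
      _ = n := negNum_base n
  · exact le_ciInf (frust_lower n)
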